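/- Let G be the continued fraction 2/1 ∔ (−1)/2 ∔ K_{n=3}^∞ a_n/b_n where for n ≥ 1: a_{2n+1} = 1 + 1/(2n²) + 1/n, b_{2n+1} = −1/(2n³), a_{2n+2} = 2(n+1)³/(n(1+2n+2n²)), b_{2n+2} = (n+1)/(1+2n+2n²). Then the numerator and denominator convergents satisfy A_{2n-1} = n+1, A_{2n} = n + 3n², B_{2n-1} = n, B_{2n} = n² for all n ≥ 1. -/

import Mathlib

open Filter Topology

/-- For the continued fraction `G = 2/1 ∔ (−1)/2 ∔ K_{n=3}^∞ a n / b n` with,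
for `n ≥ 1`, `a (2n+1) = 1 + 1/(2n²) + 1/n`, `b (2n+1) = −1/(2n³)`,
`a (2n+2) = 2(n+1)³/(n(1+2n+2n²))`, `b (2n+2) = (n+1)/(1+2n+2n²)`, the
convergents satisfy `A_{2n-1} = n+1`, `A_{2n} = n+3n²`, `B_{2n-1} = n`,
`B_{2n} = n²` for all `n ≥ 1`.  Indexing: `A (m+1)`, `B (m+1)` correspond to
subscript `m`, with `A 0 = 1`, `A 1 = 0` (`b₀ = 0`), `B 0 = 0`, `B 1 = 1`. -/
theorem example_convergents_closed_form
    (a b A B : ℕ → ℂ)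
    (ha1 : a 1 = 2) (hb1 : b 1 = 1) (ha2 : a 2 = -1) (hb2 : b 2 = 2)
    (hao : ∀ n : ℕ, 1 ≤ n →
      a (2 * n + 1) = 1 + 1 / (2 * (n : ℂ) ^ 2) + 1 / (n : ℂ))
    (hbo : ∀ n : ℕ, 1 ≤ n → b (2 * n + 1) = -1 / (2 * (n : ℂ) ^ 3))
    (hae : ∀ n : ℕ, 1 ≤ n →
      a (2 * n + 2) = 2 * ((n : ℂ) + 1) ^ 3 / ((n : ℂ) * (1 + 2 * n + 2 * n ^ 2)))
    (hbe : ∀ n : ℕ, 1 ≤ n →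
      b (2 * n + 2) = ((n : ℂ) + 1) / (1 + 2 * n + 2 * n ^ 2))
    (hA0 : A 0 = 1) (hA1 : A 1 = 0) (hB0 : B 0 = 0) (hB1 : B 1 = 1)
    (hA : ∀ n, A (n + 2) = b (n + 1) * A (n + 1) + a (n + 1) * A n)
    (hB : ∀ n, B (n + 2) = b (n + 1) * B (n + 1) + a (n + 1) * B n) :
    ∀ n : ℕ, 1 ≤ n →
      A (2 * n) = (n : ℂ) + 1 ∧ A (2 * n + 1) = (n : ℂ) + 3 * n ^ 2 ∧
      B (2 * n) = (n : ℂ) ∧ B (2 * n + 1) = (n : ℂ) ^ 2 := by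
  intro n hn
  induction n with
  | zero => omega
  | succ m ih =>
    rcases Nat.eq_zero_or_pos m with hm | hm
    · subst hm
      have e2 : A 2 = 2 := by rw [show (2:ℕ) = 0 + 2 by rfl, hA 0, hA1, hA0, hb1, ha1]; ring
      have e3 : A 3 = 4 := by rw [show A 3 = A (1 + 2) by rfl, hA 1, e2, hA1, hb2, ha2]; ring
      have f2 : B 2 = 1 := by rw [show (2:ℕ) = 0 + 2 by rfl, hB 0, hB1, hB0, hb1, ha1]; ring
      have f3 : B 3 = 1 := by rw [show (3:ℕ) = 1 + 2 by rfl, hB 1, f2, hB1, hb2, ha2]; ring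
      refine ⟨by norm_num [e2], by norm_num [e3], by norm_num [f2], by norm_num [f3]⟩
    · obtain ⟨h1, h2, h3, h4⟩ := ih hm
      have hm1 : 1 ≤ m := hm
      have hmc : (m : ℂ) ≠ 0 := Nat.cast_ne_zero.2 (by omega)
      have hq : (1 : ℂ) + 2 * m + 2 * (m : ℂ) ^ 2 ≠ 0 := by
        have : ((1 + 2 * m + 2 * m ^ 2 : ℕ) : ℂ) ≠ 0 := Nat.cast_ne_zero.2 (by positivity)
        push_cast at this; exact this
      have hm1' : 1 ≤ m + 1 := by omega
      have hmc1 : ((m : ℂ) + 1) ≠ 0 := by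
        have : ((m + 1 : ℕ) : ℂ) ≠ 0 := Nat.cast_ne_zero.2 (by omega)
        push_cast at this; exact this
      -- A (2(m+1)) = A (2m+2)
      have gA : A (2 * (m + 1)) = (↑(m + 1) : ℂ) + 1 := by
        have := hA (2 * m)
        rw [show 2 * m + 2 = 2 * (m + 1) by ring] at this
        rw [this, hbo m hm1, hao m hm1, h1, h2]
        have h6 : (m:ℂ)^6*(m:ℂ)⁻¹^6 = 1 := by rw [← mul_pow, mul_inv_cancel₀ hmc, one_pow]
        push_cast
        field_simp
        ring
      have gB : B (2 * (m + 1)) = (↑(m + 1) : ℂ) := by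
        have := hB (2 * m)
        rw [show 2 * m + 2 = 2 * (m + 1) by ring] at this
        rw [this, hbo m hm1, hao m hm1, h3, h4]
        have h6 : (m:ℂ)^6*(m:ℂ)⁻¹^6 = 1 := by rw [← mul_pow, mul_inv_cancel₀ hmc, one_pow]
        push_cast
        field_simp
        ring
      refine ⟨gA, ?_, gB, ?_⟩
      · have := hA (2 * m + 1)
        rw [show 2 * m + 1 + 2 = 2 * (m + 1) + 1 by ring,
            show 2 * m + 1 + 1 = 2 * (m + 1) by ring] at this
        have hbv : b (2 * (m + 1)) = ((m:ℂ) + 1) / (1 + 2 * m + 2 * (m:ℂ) ^ 2) := by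
          rw [show 2 * (m + 1) = 2 * m + 2 by ring]; exact hbe m hm1
        have hav : a (2 * (m + 1)) = 2 * ((m:ℂ) + 1) ^ 3 / ((m:ℂ) * (1 + 2 * m + 2 * (m:ℂ) ^ 2)) := by
          rw [show 2 * (m + 1) = 2 * m + 2 by ring]; exact hae m hm1
        rw [this, hbv, hav, gA, h2]
        push_cast
        field_simp
        rw [div_eq_iff (by convert hq using 1; ring)]
        ring
      · have := hB (2 * m + 1)
        rw [show 2 * m + 1 + 2 = 2 * (m + 1) + 1 by ring,
            show 2 * m + 1 + 1 = 2 * (m + 1) by ring] at this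
        have hbv : b (2 * (m + 1)) = ((m:ℂ) + 1) / (1 + 2 * m + 2 * (m:ℂ) ^ 2) := by
          rw [show 2 * (m + 1) = 2 * m + 2 by ring]; exact hbe m hm1
        have hav : a (2 * (m + 1)) = 2 * ((m:ℂ) + 1) ^ 3 / ((m:ℂ) * (1 + 2 * m + 2 * (m:ℂ) ^ 2)) := by
          rw [show 2 * (m + 1) = 2 * m + 2 by ring]; exact hae m hm1
        rw [this, hbv, hav, gB, h4]
        push_cast
        field_simp
        rw [div_eq_iff (by convert hq using 1; ring)]
        ring
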